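/- Let G be a residually finite group such that for every finite quotient Q of G the verbal subgroup w(Q) has order at most N (for a fixed word w and fixed integer N). Then w(G) is finite of order at most N. -/

import Mathlib

/-- The set of `w`-values of a group word `w` in a group `G`. -/
def wordValues {α : Type*} (w : FreeGroup α) (G : Type*) [Group G] : Set G :=
  {g : G | ∃ f : α → G, FreeGroup.lift f w = g}

/-- The verbal subgroup `w(G)`. -/
def verbalSubgroup {α : Type*} (w : FreeGroup α) (G : Type*) [Group G] : Subgroup G :=
  Subgroup.closure (wordValues w G)

/-- A group is residually finite if every nontrivial element avoids some normal subgroup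
of finite index. -/
def ResiduallyFinite (G : Type*) [Group G] : Prop :=
  ∀ g : G, g ≠ 1 → ∃ N : Subgroup G, N.Normal ∧ N.FiniteIndex ∧ g ∉ N

/-- Homomorphisms map word values to word values. -/
lemma wordValues_image_subset {α : Type*} (w : FreeGroup α) {G H : Type*} [Group G] [Group H]
    (φ : G →* H) : φ '' wordValues w G ⊆ wordValues w H := by
  rintro _ ⟨g, ⟨f, rfl⟩, rfl⟩
  exact ⟨φ ∘ f, (FreeGroup.lift_unique (φ.comp (FreeGroup.lift f)) (fun x => by simp)).symm⟩

/-- Homomorphisms map verbal subgroups into verbal subgroups. -/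
lemma verbal_map_le {α : Type*} (w : FreeGroup α) {G H : Type*} [Group G] [Group H]
    (φ : G →* H) : (verbalSubgroup w G).map φ ≤ verbalSubgroup w H := by
  rw [verbalSubgroup, MonoidHom.map_closure]
  exact Subgroup.closure_mono (wordValues_image_subset w φ)

open scoped Classical in
/-- Every finite subset of `w(G)` has at most `N₀` elements. -/
lemma stmt13_key {α : Type*} (w : FreeGroup α) {G : Type*} [Group G] (N₀ : ℕ)
    (hrf : ResiduallyFinite G)
    (hquot : ∀ (N : Subgroup G) (_ : N.Normal), N.FiniteIndex →
      Nat.card ↥(verbalSubgroup w (G ⧸ N)) ≤ N₀)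
    (t : Finset G) (ht : ↑t ⊆ (verbalSubgroup w G : Set G)) : t.card ≤ N₀ := by
  -- choose a separating finite-index normal subgroup for each pair
  have hF : ∀ p : G × G, ∃ N : Subgroup G, N.Normal ∧ N.FiniteIndex ∧
      (p.1⁻¹ * p.2 ≠ 1 → p.1⁻¹ * p.2 ∉ N) := by
    intro p
    by_cases h : p.1⁻¹ * p.2 = 1
    · exact ⟨⊤, inferInstance, inferInstance, fun hc => absurd h hc⟩
    · obtain ⟨N, h1, h2, h3⟩ := hrf _ h
      exact ⟨N, h1, h2, fun _ => h3⟩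
  choose F hFn hFi hFs using hF
  set K : Subgroup G := ⨅ p : (↥t × ↥t), F ((p.1 : G), (p.2 : G)) with hK
  have hKn : K.Normal := by
    constructor
    intro n hn g
    rw [hK, Subgroup.mem_iInf] at hn ⊢
    exact fun p => (hFn _).conj_mem n (hn p) g
  have hKi : K.FiniteIndex := Subgroup.finiteIndex_iInf fun p => hFi _
  have hKle : ∀ p : ↥t × ↥t, K ≤ F ((p.1 : G), (p.2 : G)) := fun p => iInf_le _ p
  let φ : G →* G ⧸ K := QuotientGroup.mk' K
  have hfinQ : Finite (G ⧸ K) := by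
    have := hKi.index_ne_zero
    rw [Subgroup.index] at this
    exact Nat.finite_of_card_ne_zero this
  -- φ is injective on t
  have hinj : Set.InjOn φ ↑t := by
    intro a ha b hb hab
    by_contra hne
    have h1 : a⁻¹ * b ≠ 1 := fun h => hne (by
      have := congrArg (a * ·) h; simpa [mul_assoc] using this.symm)
    have h2 : a⁻¹ * b ∈ K := (QuotientGroup.eq (s := K)).mp hab
    exact hFs (a, b) h1 (hKle (⟨a, ha⟩, ⟨b, hb⟩) h2)
  have himg : ↑(Finset.image φ t) ⊆ (verbalSubgroup w (G ⧸ K) : Set (G ⧸ K)) := by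
    intro x hx
    simp only [Finset.coe_image, Set.mem_image, Finset.mem_coe] at hx
    obtain ⟨a, ha, rfl⟩ := hx
    exact verbal_map_le w φ ⟨a, ht ha, rfl⟩
  calc t.card = (Finset.image φ t).card := (Finset.card_image_of_injOn hinj).symm
    _ = (↑(Finset.image φ t) : Set (G ⧸ K)).ncard := (Set.ncard_coe_finset _).symm
    _ ≤ (verbalSubgroup w (G ⧸ K) : Set (G ⧸ K)).ncard :=
        Set.ncard_le_ncard himg (Set.toFinite _)
    _ = Nat.card ↥(verbalSubgroup w (G ⧸ K)) := (Nat.card_coe_set_eq _).symm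
    _ ≤ N₀ := hquot K hKn hKi

/-- If `G` is residually finite and `|w(Q)| ≤ N₀` for every finite quotient
`Q` of `G`, then `w(G)` is finite of order at most `N₀`. -/
theorem stmt13 {α : Type*} (w : FreeGroup α) {G : Type*} [Group G] (N₀ : ℕ)
    (hrf : ResiduallyFinite G)
    (hquot : ∀ (N : Subgroup G) (_ : N.Normal), N.FiniteIndex →
      Nat.card ↥(verbalSubgroup w (G ⧸ N)) ≤ N₀) :
    Finite ↥(verbalSubgroup w G) ∧ Nat.card ↥(verbalSubgroup w G) ≤ N₀ := by
  have key := stmt13_key w N₀ hrf hquot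
  have hfin : (verbalSubgroup w G : Set G).Finite := by
    by_contra h
    obtain ⟨t, hts, htc⟩ := Set.Infinite.exists_subset_card_eq h (N₀ + 1)
    have := key t hts
    omega
  refine ⟨hfin.to_subtype, ?_⟩
  have : Nat.card ↥(verbalSubgroup w G) = (verbalSubgroup w G : Set G).ncard := by
    rw [← Nat.card_coe_set_eq]; rfl
  rw [this, ← Set.Finite.coe_toFinset hfin, Set.ncard_coe_finset]
  exact key hfin.toFinset (by rw [Set.Finite.coe_toFinset])
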